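/- Let λ > 0 and let a, b be d×d real positive semidefinite symmetric matrices with a − λ²·I_d and b − λ²·I_d positive semidefinite. Then the operator norms satisfy ‖√a − √b‖ ≤ (2λ)⁻¹ ‖a − b‖, where √a, √b are the unique positive semidefinite square roots and ‖·‖ is the operator norm on ℝ^d with the Euclidean norm. -/

import Mathlib

open scoped ComplexOrder in
/-- The positive semidefinite square root of a positive semidefinite matrix
(the definition `Matrix.PosSemidef.sqrt` of Mathlib, Dec 2024, since removed). -/
noncomputable def Matrix.PosSemidef.sqrt {n 𝕜 : Type*} [Fintype n] [DecidableEq n] [RCLike 𝕜]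
    {A : Matrix n n 𝕜} (hA : A.PosSemidef) : Matrix n n 𝕜 :=
  hA.1.eigenvectorUnitary.1 * Matrix.diagonal ((↑) ∘ Real.sqrt ∘ hA.1.eigenvalues) *
  (star hA.1.eigenvectorUnitary : Matrix n n 𝕜)

lemma Matrix.PosSemidef.posSemidef_sqrt {d : ℕ} {A : Matrix (Fin d) (Fin d) ℝ}
    (hA : A.PosSemidef) : hA.sqrt.PosSemidef := by
  unfold Matrix.PosSemidef.sqrt
  have h := (Matrix.posSemidef_diagonal_iff.mpr
    (fun i => Real.sqrt_nonneg (hA.1.eigenvalues i))).mul_mul_conjTranspose_same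
      (hA.1.eigenvectorUnitary : Matrix (Fin d) (Fin d) ℝ)
  simpa [Matrix.star_eq_conjTranspose, Function.comp_def] using h

lemma Matrix.PosSemidef.sqrt_mul_self {d : ℕ} {A : Matrix (Fin d) (Fin d) ℝ}
    (hA : A.PosSemidef) : hA.sqrt * hA.sqrt = A := by
  have hU : (star hA.1.eigenvectorUnitary : Matrix (Fin d) (Fin d) ℝ) *
      (hA.1.eigenvectorUnitary : Matrix (Fin d) (Fin d) ℝ) = 1 := by simp
  have hD : Matrix.diagonal (RCLike.ofReal ∘ Real.sqrt ∘ hA.1.eigenvalues : Fin d → ℝ) *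
      Matrix.diagonal (RCLike.ofReal ∘ Real.sqrt ∘ hA.1.eigenvalues : Fin d → ℝ) =
      Matrix.diagonal (RCLike.ofReal ∘ hA.1.eigenvalues : Fin d → ℝ) := by
    rw [Matrix.diagonal_mul_diagonal]
    congr 1
    funext i
    simp [Real.mul_self_sqrt (hA.eigenvalues_nonneg i)]
  conv_rhs => rw [hA.1.spectral_theorem, Unitary.conjStarAlgAut_apply]
  unfold Matrix.PosSemidef.sqrt
  simp only [Matrix.mul_assoc]
  rw [← Matrix.mul_assoc _ (hA.1.eigenvectorUnitary : Matrix (Fin d) (Fin d) ℝ), hU,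
    Matrix.one_mul, ← Matrix.mul_assoc (Matrix.diagonal _), hD]

open Matrix

variable {d : ℕ}

-- inner product on EuclideanSpace ℝ equals dotProduct
lemma inner_eq_dot (x y : EuclideanSpace ℝ (Fin d)) :
    (inner ℝ x y : ℝ) = (⇑x : Fin d → ℝ) ⬝ᵥ ⇑y := by
  simp [PiLp.inner_apply, dotProduct, mul_comm]

lemma basis_dot_self {M : Matrix (Fin d) (Fin d) ℝ} (hM : M.IsHermitian) (i : Fin d) :
    (⇑(hM.eigenvectorBasis i) : Fin d → ℝ) ⬝ᵥ ⇑(hM.eigenvectorBasis i) = 1 := by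
  rw [← inner_eq_dot, real_inner_self_eq_norm_mul_norm, hM.eigenvectorBasis.orthonormal.1 i,
    one_mul]

lemma aux_eig_lb {lam : ℝ} {a : Matrix (Fin d) (Fin d) ℝ} (ha : a.PosSemidef)
    (hal : (a - lam ^ 2 • (1 : Matrix (Fin d) (Fin d) ℝ)).PosSemidef) (i : Fin d) :
    lam ^ 2 ≤ ha.1.eigenvalues i := by
  have h2 := hal.dotProduct_mulVec_nonneg (⇑(ha.1.eigenvectorBasis i))
  rw [sub_mulVec, smul_mulVec, one_mulVec, ha.1.mulVec_eigenvectorBasis, ← sub_smul,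
    dotProduct_smul] at h2
  have hd : star (⇑(ha.1.eigenvectorBasis i) : Fin d → ℝ) = ⇑(ha.1.eigenvectorBasis i) := by
    simp
  rw [hd, basis_dot_self, smul_eq_mul, mul_one, sub_nonneg] at h2
  exact h2

lemma aux_psd_sqrt_sub {lam : ℝ} (hlam : 0 ≤ lam) {a : Matrix (Fin d) (Fin d) ℝ}
    (ha : a.PosSemidef)
    (hal : (a - lam ^ 2 • (1 : Matrix (Fin d) (Fin d) ℝ)).PosSemidef) :
    (ha.sqrt - lam • (1 : Matrix (Fin d) (Fin d) ℝ)).PosSemidef := by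
  have heig : ∀ i, lam ≤ Real.sqrt (ha.1.eigenvalues i) := fun i => by
    calc lam = Real.sqrt (lam ^ 2) := by rw [Real.sqrt_sq hlam]
    _ ≤ _ := Real.sqrt_le_sqrt (aux_eig_lb ha hal i)
  set U : Matrix (Fin d) (Fin d) ℝ := (ha.1.eigenvectorUnitary : Matrix (Fin d) (Fin d) ℝ)
  have hU : U * Uᴴ = 1 := by
    simpa [Matrix.star_eq_conjTranspose] using
      (Matrix.mem_unitaryGroup_iff).mp ha.1.eigenvectorUnitary.2
  have key : ha.sqrt - lam • (1 : Matrix (Fin d) (Fin d) ℝ) =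
      U * Matrix.diagonal (fun i => Real.sqrt (ha.1.eigenvalues i) - lam) * Uᴴ := by
    have h1 : ha.sqrt = U * Matrix.diagonal (fun i => Real.sqrt (ha.1.eigenvalues i)) * Uᴴ := by
      rw [Matrix.PosSemidef.sqrt]
      rfl
    have h2 : lam • (1 : Matrix (Fin d) (Fin d) ℝ) =
        U * Matrix.diagonal (fun _ => lam) * Uᴴ := by
      have : Matrix.diagonal (fun _ : Fin d => lam) = lam • (1 : Matrix (Fin d) (Fin d) ℝ) := by
        rw [← Matrix.diagonal_one, ← Matrix.diagonal_smul]
        ext i j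
        simp [Matrix.diagonal_apply, Matrix.one_apply]
      rw [this, Matrix.mul_smul, Matrix.smul_mul, Matrix.mul_one, hU]
    rw [h1, h2, ← Matrix.sub_mul, ← Matrix.mul_sub, Matrix.diagonal_sub]
  rw [key]
  exact (Matrix.posSemidef_diagonal_iff.mpr
    (fun i => sub_nonneg.mpr (heig i))).mul_mul_conjTranspose_same U

lemma clm_apply_coe (M : Matrix (Fin d) (Fin d) ℝ) (x : EuclideanSpace ℝ (Fin d)) :
    (⇑(Matrix.toEuclideanCLM (𝕜 := ℝ) M x) : Fin d → ℝ) = M *ᵥ ⇑x := by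
  have := Matrix.ofLp_toEuclideanCLM (𝕜 := ℝ) M x
  simp only [Matrix.toLin'_apply] at this
  exact this

lemma inner_clm (M : Matrix (Fin d) (Fin d) ℝ) (x y : EuclideanSpace ℝ (Fin d)) :
    (inner ℝ x (Matrix.toEuclideanCLM (𝕜 := ℝ) M y) : ℝ) = (⇑x : Fin d → ℝ) ⬝ᵥ (M *ᵥ ⇑y) := by
  rw [inner_eq_dot, clm_apply_coe]

lemma herm_dot_swap {M : Matrix (Fin d) (Fin d) ℝ} (hM : M.IsHermitian)
    (x y : Fin d → ℝ) : x ⬝ᵥ (M *ᵥ y) = (M *ᵥ x) ⬝ᵥ y := by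
  rw [Matrix.dotProduct_mulVec, ← Matrix.vecMul_transpose]
  congr 1
  rw [← Matrix.conjTranspose_eq_transpose_of_trivial, hM.eq]

lemma clm_eigen {M : Matrix (Fin d) (Fin d) ℝ} (hM : M.IsHermitian) (i : Fin d) :
    Matrix.toEuclideanCLM (𝕜 := ℝ) M (hM.eigenvectorBasis i) =
      hM.eigenvalues i • hM.eigenvectorBasis i := by
  apply (WithLp.equiv 2 (Fin d → ℝ)).injective
  ext j
  have h := congrFun (clm_apply_coe M (hM.eigenvectorBasis i)) j
  have h2 := congrFun (hM.mulVec_eigenvectorBasis i) j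
  exact h.trans h2

lemma norm_le_of_eig {M : Matrix (Fin d) (Fin d) ℝ} (hM : M.IsHermitian) {c : ℝ} (hc : 0 ≤ c)
    (h : ∀ i, |hM.eigenvalues i| ≤ c) :
    ‖Matrix.toEuclideanCLM (𝕜 := ℝ) M‖ ≤ c := by
  apply ContinuousLinearMap.opNorm_le_bound _ hc
  intro y
  set T := Matrix.toEuclideanCLM (𝕜 := ℝ) M with hT
  set B := hM.eigenvectorBasis with hB
  have hrep : ∀ i, B.repr (T y) i = hM.eigenvalues i * B.repr y i := by
    intro i
    rw [B.repr_apply_apply, B.repr_apply_apply, inner_clm, herm_dot_swap hM, hB,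
      hM.mulVec_eigenvectorBasis, smul_dotProduct, smul_eq_mul, inner_eq_dot]
  have h2 : ∀ i, ‖B.repr (T y) i‖ ^ 2 ≤ c ^ 2 * ‖B.repr y i‖ ^ 2 := by
    intro i
    rw [hrep i]
    have hμ : (hM.eigenvalues i) ^ 2 ≤ c ^ 2 := sq_le_sq' (abs_le.mp (h i)).1 (abs_le.mp (h i)).2
    have : ‖hM.eigenvalues i * B.repr y i‖ ^ 2
        = (hM.eigenvalues i) ^ 2 * ‖B.repr y i‖ ^ 2 := by
      rw [norm_mul, mul_pow, Real.norm_eq_abs, sq_abs]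
    rw [this]
    exact mul_le_mul_of_nonneg_right hμ (by positivity)
  calc ‖T y‖ = Real.sqrt (∑ i, ‖B.repr (T y) i‖ ^ 2) := by
        rw [← B.repr.norm_map (T y), EuclideanSpace.norm_eq]
  _ ≤ Real.sqrt (∑ i, c ^ 2 * ‖B.repr y i‖ ^ 2) :=
        Real.sqrt_le_sqrt (Finset.sum_le_sum fun i _ => h2 i)
  _ = c * Real.sqrt (∑ i, ‖B.repr y i‖ ^ 2) := by
        rw [← Finset.mul_sum, Real.sqrt_mul (by positivity), Real.sqrt_sq hc]
  _ = c * ‖y‖ := by rw [← EuclideanSpace.norm_eq, B.repr.norm_map]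

/-- If `a, b` are real positive semidefinite symmetric `d×d` matrices with
`a − λ²·I` and `b − λ²·I` positive semidefinite (`λ > 0`), then the Euclidean operator
norms satisfy `‖√a − √b‖ ≤ (2λ)⁻¹ ‖a − b‖`, where `√·` denotes the unique positive
semidefinite square root. -/
theorem stmt_3 (d : ℕ) (lam : ℝ) (hlam : 0 < lam)
    (a b : Matrix (Fin d) (Fin d) ℝ) (ha : a.PosSemidef) (hb : b.PosSemidef)
    (hal : (a - lam ^ 2 • (1 : Matrix (Fin d) (Fin d) ℝ)).PosSemidef)
    (hbl : (b - lam ^ 2 • (1 : Matrix (Fin d) (Fin d) ℝ)).PosSemidef) :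
    ‖Matrix.toEuclideanCLM (𝕜 := ℝ) (ha.sqrt - hb.sqrt)‖
      ≤ (2 * lam)⁻¹ * ‖Matrix.toEuclideanCLM (𝕜 := ℝ) (a - b)‖ := by
  have hsp : ha.sqrt.PosSemidef := ha.posSemidef_sqrt
  have htp : hb.sqrt.PosSemidef := hb.posSemidef_sqrt
  have hM : (ha.sqrt - hb.sqrt).IsHermitian := hsp.1.sub htp.1
  have hc0 : (0:ℝ) ≤ (2 * lam)⁻¹ * ‖Matrix.toEuclideanCLM (𝕜 := ℝ) (a - b)‖ := by positivity
  apply norm_le_of_eig hM hc0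
  intro i
  set μ := hM.eigenvalues i with hμdef
  set v := (⇑(hM.eigenvectorBasis i) : Fin d → ℝ) with hv
  have hvv : v ⬝ᵥ v = 1 := basis_dot_self hM i
  have hstar : star v = v := by simp
  have hev : (ha.sqrt - hb.sqrt) *ᵥ v = μ • v := hM.mulVec_eigenvectorBasis i
  have hqs : lam ≤ v ⬝ᵥ (ha.sqrt *ᵥ v) := by
    have h := (aux_psd_sqrt_sub hlam.le ha hal).dotProduct_mulVec_nonneg v
    rwa [hstar, Matrix.sub_mulVec, dotProduct_sub, Matrix.smul_mulVec,
      Matrix.one_mulVec, dotProduct_smul, hvv, smul_eq_mul, mul_one, sub_nonneg] at h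
  have hqt : lam ≤ v ⬝ᵥ (hb.sqrt *ᵥ v) := by
    have h := (aux_psd_sqrt_sub hlam.le hb hbl).dotProduct_mulVec_nonneg v
    rwa [hstar, Matrix.sub_mulVec, dotProduct_sub, Matrix.smul_mulVec,
      Matrix.one_mulVec, dotProduct_smul, hvv, smul_eq_mul, mul_one, sub_nonneg] at h
  have hid : a - b = ha.sqrt * (ha.sqrt - hb.sqrt) + (ha.sqrt - hb.sqrt) * hb.sqrt := by
    rw [mul_sub, sub_mul, ha.sqrt_mul_self, hb.sqrt_mul_self]
    abel
  have hq : v ⬝ᵥ ((a - b) *ᵥ v)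
      = μ * (v ⬝ᵥ (ha.sqrt *ᵥ v) + v ⬝ᵥ (hb.sqrt *ᵥ v)) := by
    rw [hid, Matrix.add_mulVec, dotProduct_add, ← Matrix.mulVec_mulVec,
      ← Matrix.mulVec_mulVec, hev, Matrix.mulVec_smul, dotProduct_smul,
      herm_dot_swap hM, hev, smul_dotProduct, smul_eq_mul, smul_eq_mul]
    ring
  have hbound : |v ⬝ᵥ ((a - b) *ᵥ v)| ≤ ‖Matrix.toEuclideanCLM (𝕜 := ℝ) (a - b)‖ := by
    set T := Matrix.toEuclideanCLM (𝕜 := ℝ) (a - b) with hT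
    set x := hM.eigenvectorBasis i with hx
    have hx1 : ‖x‖ = 1 := hM.eigenvectorBasis.orthonormal.1 i
    have h1 := abs_real_inner_le_norm x (T x)
    rw [inner_clm] at h1
    calc |v ⬝ᵥ ((a - b) *ᵥ v)| ≤ ‖x‖ * ‖T x‖ := h1
    _ ≤ ‖x‖ * (‖T‖ * ‖x‖) := by
        exact mul_le_mul_of_nonneg_left (T.le_opNorm x) (norm_nonneg x)
    _ = ‖T‖ := by rw [hx1]; ring
  have h2l : (0:ℝ) < 2 * lam := by linarith
  have habs : |μ| * (2 * lam) ≤ |v ⬝ᵥ ((a - b) *ᵥ v)| := by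
    rw [hq, abs_mul]
    have h0 : 0 ≤ v ⬝ᵥ (ha.sqrt *ᵥ v) + v ⬝ᵥ (hb.sqrt *ᵥ v) := by linarith
    rw [abs_of_nonneg h0]
    exact mul_le_mul_of_nonneg_left (by linarith) (abs_nonneg μ)
  rw [inv_mul_eq_div, le_div_iff₀ h2l]
  exact habs.trans hbound
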